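/- Let y ∈ ℝ² and let x ∈ ℝ² with x ≠ y. Then the traction at x of the matrix field z ↦ J(z−y) equals U_2(x,y)/|x−y|². -/

import Mathlib

open Real Filter MeasureTheory

/-- Euclidean norm on ℝ² (represented as `Fin 2 → ℝ`). -/
noncomputable def nrm2 (z : Fin 2 → ℝ) : ℝ := Real.sqrt (z 0 ^ 2 + z 1 ^ 2)

/-- Euclidean inner product on ℝ². -/
noncomputable def dot2 (a b : Fin 2 → ℝ) : ℝ := a 0 * b 0 + a 1 * b 1

/-- identity matrix entries -/
noncomputable def idm (i j : Fin 2) : ℝ := if i = j then 1 else 0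

/-- J(z) = z zᵀ / |z|² -/
noncomputable def Jmat (z : Fin 2 → ℝ) (i j : Fin 2) : ℝ := z i * z j / nrm2 z ^ 2

/-- divergence of a planar vector field -/
noncomputable def divg (v : (Fin 2 → ℝ) → (Fin 2 → ℝ)) (x : Fin 2 → ℝ) : ℝ :=
  fderiv ℝ v x (Pi.single 0 1) 0 + fderiv ℝ v x (Pi.single 1 1) 1

/-- traction operator T on a planar vector field:
(Tv)(x) = λ (div v)(x) ν + 2μ ((ν·∇)v)(x) + μ (div(Qv))(x) Qν, where Q = [[0,1],[-1,0]]. -/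
noncomputable def traction (lam mu : ℝ) (ν : Fin 2 → ℝ)
    (v : (Fin 2 → ℝ) → (Fin 2 → ℝ)) (x : Fin 2 → ℝ) : Fin 2 → ℝ :=
  (lam * divg v x) • ν + (2 * mu) • fderiv ℝ v x ν
    + (mu * divg (fun y => ![v y 1, -(v y 0)]) x) • ![ν 1, -(ν 0)]

/-- traction of a 2×2 matrix-valued field, acting columnwise -/
noncomputable def tractionM (lam mu : ℝ) (ν : Fin 2 → ℝ)
    (G : (Fin 2 → ℝ) → Fin 2 → Fin 2 → ℝ) (x : Fin 2 → ℝ) (i j : Fin 2) : ℝ :=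
  traction lam mu ν (fun y i' => G y i' j) x i

/-- U₁(x,y) = λ ν (x−y)ᵀ + μ (x−y) νᵀ + μ (ν·(x−y)) I -/
noncomputable def U1mat (lam mu : ℝ) (ν x y : Fin 2 → ℝ) (i j : Fin 2) : ℝ :=
  lam * ν i * (x j - y j) + mu * (x i - y i) * ν j + mu * dot2 ν (x - y) * idm i j

/-- U₂(x,y) = (λ+2μ) ν (x−y)ᵀ + μ (x−y) νᵀ + μ (ν·(x−y)) (I − 4J(x−y)) -/
noncomputable def U2mat (lam mu : ℝ) (ν x y : Fin 2 → ℝ) (i j : Fin 2) : ℝ :=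
  (lam + 2 * mu) * ν i * (x j - y j) + mu * (x i - y i) * ν j
    + mu * dot2 ν (x - y) * (idm i j - 4 * Jmat (x - y) i j)

/-- Laguerre polynomial L_n(x) = ∑_{k=0}^n (−1)^k (n choose k) x^k / k! -/
noncomputable def lagPoly (n : ℕ) (x : ℝ) : ℝ :=
  ∑ k ∈ Finset.range (n + 1), (-1 : ℝ) ^ k * (n.choose k : ℝ) * x ^ k / (k.factorial : ℝ)


noncomputable def Lmap (d : Fin 2 → ℝ) (r2 : ℝ) (a b : Fin 2) : (Fin 2 → ℝ) →L[ℝ] ℝ :=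
  (d b / r2) • ContinuousLinearMap.proj a + (d a / r2) • ContinuousLinearMap.proj b +
    (-(2 * d a * d b * d 0) / r2 ^ 2) • ContinuousLinearMap.proj 0 +
    (-(2 * d a * d b * d 1) / r2 ^ 2) • ContinuousLinearMap.proj 1

lemma Lmap_apply (d : Fin 2 → ℝ) (r2 : ℝ) (a b : Fin 2) (w : Fin 2 → ℝ) :
    Lmap d r2 a b w = d b / r2 * w a + d a / r2 * w b
      - 2 * d a * d b * d 0 / r2 ^ 2 * w 0 - 2 * d a * d b * d 1 / r2 ^ 2 * w 1 := by
  simp [Lmap]; ring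

lemma r2_ne (y x : Fin 2 → ℝ) (hxy : x ≠ y) :
    (x 0 - y 0) * (x 0 - y 0) + (x 1 - y 1) * (x 1 - y 1) ≠ 0 := by
  intro h
  apply hxy
  have h0 : x 0 - y 0 = 0 := mul_self_eq_zero.mp (by nlinarith [mul_self_nonneg (x 1 - y 1)])
  have h1 : x 1 - y 1 = 0 := mul_self_eq_zero.mp (by nlinarith [mul_self_nonneg (x 0 - y 0)])
  funext k; fin_cases k <;> simp <;> linarith

lemma hasFDerivJ (y x : Fin 2 → ℝ) (hxy : x ≠ y) (a b : Fin 2) :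
    HasFDerivAt (fun z : Fin 2 → ℝ => Jmat (z - y) a b)
      (Lmap (fun k => x k - y k) ((x 0 - y 0) * (x 0 - y 0) + (x 1 - y 1) * (x 1 - y 1)) a b)
      x := by
  have hne := r2_ne y x hxy
  have heq : (fun z : Fin 2 → ℝ => Jmat (z - y) a b)
      = fun z => ((z a - y a) * (z b - y b)) *
          ((z 0 - y 0) * (z 0 - y 0) + (z 1 - y 1) * (z 1 - y 1))⁻¹ := by
    funext z
    have hs : nrm2 (z - y) ^ 2 = (z 0 - y 0) * (z 0 - y 0) + (z 1 - y 1) * (z 1 - y 1) := by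
      have : (z - y) 0 ^ 2 + (z - y) 1 ^ 2 = (z 0 - y 0) * (z 0 - y 0) + (z 1 - y 1) * (z 1 - y 1) := by
        simp [Pi.sub_apply]; ring
      rw [nrm2, Real.sq_sqrt (by positivity), this]
    simp [Jmat, hs, Pi.sub_apply, div_eq_mul_inv]
  rw [heq]
  have hproj : ∀ k : Fin 2, HasFDerivAt (fun z : Fin 2 → ℝ => z k - y k)
      (ContinuousLinearMap.proj k : (Fin 2 → ℝ) →L[ℝ] ℝ) x :=
    fun k => (hasFDerivAt_apply k x).sub_const _
  have hden := ((hproj 0).mul (hproj 0)).add ((hproj 1).mul (hproj 1))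
  have hinv := (hasDerivAt_inv hne).comp_hasFDerivAt x hden
  have hmul := ((hproj a).mul (hproj b)).mul hinv
  refine hmul.congr_fderiv ?_
  apply ContinuousLinearMap.ext
  intro w
  simp only [Lmap, ContinuousLinearMap.add_apply, ContinuousLinearMap.smul_apply,
    ContinuousLinearMap.proj_apply, smul_eq_mul, ContinuousLinearMap.coe_smul',
    Pi.smul_apply, Function.comp_apply, neg_mul, mul_neg, neg_neg]
  have key : ∀ A B C E wa wb w0 w1 : ℝ, C * C + E * E ≠ 0 →
      -(A * B * (((C * C + E * E) ^ 2)⁻¹ * (C * w0 + C * w0 + (E * w1 + E * w1)))) +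
        (C * C + E * E)⁻¹ * (A * wb + B * wa) =
      B / (C * C + E * E) * wa + A / (C * C + E * E) * wb +
        -(2 * A * B * C) / (C * C + E * E) ^ 2 * w0 +
        -(2 * A * B * E) / (C * C + E * E) ^ 2 * w1 := by
    intro A B C E wa wb w0 w1 h
    field_simp
    ring
  exact key _ _ _ _ _ _ _ _ hne

set_option maxHeartbeats 1600000 in
/-- The traction of the matrix field z ↦ J(z−y) equals U₂(x,y)/|x−y|². -/
theorem traction_J_field (lam mu : ℝ) (ν : Fin 2 → ℝ) (y x : Fin 2 → ℝ) (hxy : x ≠ y) :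
    ∀ i j : Fin 2,
      tractionM lam mu ν (fun z => Jmat (z - y)) x i j
        = U2mat lam mu ν x y i j / nrm2 (x - y) ^ 2 := by
  intro i j
  have hne := r2_ne y x hxy
  have hVF : HasFDerivAt (fun z i' => Jmat (z - y) i' j)
      (ContinuousLinearMap.pi fun i' => Lmap (fun k => x k - y k)
        ((x 0 - y 0) * (x 0 - y 0) + (x 1 - y 1) * (x 1 - y 1)) i' j) x :=
    hasFDerivAt_pi.mpr fun i' => hasFDerivJ y x hxy i' j
  have hRF : HasFDerivAt (fun z => ![Jmat (z - y) 1 j, -(Jmat (z - y) 0 j)])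
      (ContinuousLinearMap.pi fun k =>
        (![Lmap (fun k => x k - y k)
            ((x 0 - y 0) * (x 0 - y 0) + (x 1 - y 1) * (x 1 - y 1)) 1 j,
          -(Lmap (fun k => x k - y k)
            ((x 0 - y 0) * (x 0 - y 0) + (x 1 - y 1) * (x 1 - y 1)) 0 j)] : Fin 2 → _) k) x := by
    apply hasFDerivAt_pi.mpr
    intro k
    fin_cases k
    · simpa using hasFDerivJ y x hxy 1 j
    · simpa using (hasFDerivJ y x hxy 0 j).fun_neg
  have hnrm : nrm2 (x - y) ^ 2 = (x 0 - y 0) * (x 0 - y 0) + (x 1 - y 1) * (x 1 - y 1) := by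
    have h2 : (x - y) 0 ^ 2 + (x - y) 1 ^ 2
        = (x 0 - y 0) * (x 0 - y 0) + (x 1 - y 1) * (x 1 - y 1) := by
      simp [Pi.sub_apply]; ring
    rw [nrm2, Real.sq_sqrt (by positivity), h2]
  simp only [tractionM, traction, divg]
  rw [hVF.fderiv, hRF.fderiv, hnrm]
  clear hVF hRF
  simp only [ContinuousLinearMap.pi_apply, Pi.add_apply, Pi.smul_apply, smul_eq_mul,
    ContinuousLinearMap.neg_apply, Matrix.cons_val_zero, Matrix.cons_val_one, Matrix.head_cons,
    Lmap_apply, Pi.single_apply, U2mat, idm, dot2, Jmat, Pi.sub_apply, hnrm]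
  fin_cases i <;> fin_cases j <;>
  · simp only [ContinuousLinearMap.neg_apply, Matrix.cons_val_zero, Matrix.cons_val_one,
      Matrix.head_cons, Lmap_apply, Pi.single_apply, Fin.isValue, Fin.zero_eta, Fin.mk_one]
    norm_num
    generalize x 0 - y 0 = A at hne ⊢
    generalize x 1 - y 1 = B at hne ⊢
    generalize ν 0 = p
    generalize ν 1 = q
    have h2 : A ^ 2 + B ^ 2 ≠ 0 := by rwa [sq, sq]
    have h2' : B ^ 2 + A ^ 2 ≠ 0 := by rw [add_comm]; exact h2
    field_simp
    ring
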